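/- Let R be a commutative ring, I an ideal, and g ∈ R a non-zero-divisor on R/I (i.e., (I : g) = I). Let f ∈ R be a non-zero-divisor with (I·f : g) = (I : g)·f. Then the ideal (I·f, g) has the presentation: a syzygy of the generators g_0·f, ..., g_n·f, g (where I = (g_0,...,g_n)) is generated by the syzygies of g_0,...,g_n together with the Koszul syzygies g·e_i − f·g_i·e_{n+1}. -/

import Mathlib

/-- Presentation of `(I·f, g)` in the non-zero-divisor case: the syzygies of the
generators `g₀·f, …, gₙ·f, g` are generated by the syzygies of `g₀, …, gₙ`
(extended by zero in the last coordinate) together with the Koszul syzygies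
`g·e_i − f·g_i·e_{n+1}`. -/
theorem stmt5 {R : Type*} [CommRing R] {n : ℕ}
    (gv : Fin (n + 1) → R) (f g : R) (I : Ideal R)
    (hI : I = Ideal.span (Set.range gv))
    (hgnzd : I.colon (Ideal.span {g}) = I)
    (hf : f ∈ nonZeroDivisors R)
    (hcolon : (I * Ideal.span {f}).colon (Ideal.span {g}) =
      I.colon (Ideal.span {g}) * Ideal.span {f}) :
    {w : Fin (n + 2) → R | ∑ i, w i * (Fin.snoc (fun j => gv j * f) g : Fin (n + 2) → R) i = 0} =
      ↑(Submodule.span R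
        ({w : Fin (n + 2) → R |
            w (Fin.last (n + 1)) = 0 ∧ ∑ i, w (Fin.castSucc i) * gv i = 0} ∪
         {w : Fin (n + 2) → R | ∃ i : Fin (n + 1),
            w = g • (Pi.single (Fin.castSucc i) (1 : R) : Fin (n + 2) → R)
              - (f * gv i) • (Pi.single (Fin.last (n + 1)) (1 : R) : Fin (n + 2) → R)})) := by
  classical
  have hsum : ∀ w : Fin (n + 2) → R,
      ∑ i, w i * (Fin.snoc (fun j => gv j * f) g : Fin (n + 2) → R) i
        = (∑ j, w j.castSucc * gv j) * f + w (Fin.last (n + 1)) * g := by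
    intro w
    rw [Fin.sum_univ_castSucc]
    simp [Finset.sum_mul, mul_assoc]
  ext w
  simp only [Set.mem_setOf_eq, SetLike.mem_coe]
  constructor
  · intro hw
    rw [hsum] at hw
    have h1 : w (Fin.last (n + 1)) * g ∈ I * Ideal.span {f} := by
      have heq : w (Fin.last (n + 1)) * g = (∑ j, -(w j.castSucc) * gv j) * f := by
        rw [show (∑ j, -(w j.castSucc) * gv j) = -(∑ j, w j.castSucc * gv j) by
          rw [← Finset.sum_neg_distrib]; simp]
        linear_combination hw
      rw [heq]
      refine Ideal.mul_mem_mul ?_ (Ideal.subset_span rfl)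
      rw [hI]
      exact Ideal.sum_mem _ fun j _ =>
        Ideal.mul_mem_left _ _ (Ideal.subset_span ⟨j, rfl⟩)
    have h2 : w (Fin.last (n + 1)) ∈ I * Ideal.span {f} := by
      have := Ideal.mem_colon_span_singleton.mpr h1
      rwa [hcolon, hgnzd] at this
    obtain ⟨c, hcI, hcf⟩ := Ideal.mem_mul_span_singleton.mp h2
    rw [hI, Ideal.span, Submodule.mem_span_range_iff_exists_fun] at hcI
    obtain ⟨a, ha⟩ := hcI
    simp only [smul_eq_mul] at ha
    set kos : Fin (n + 1) → (Fin (n + 2) → R) := fun i =>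
      g • (Pi.single (Fin.castSucc i) (1 : R) : Fin (n + 2) → R)
        - (f * gv i) • (Pi.single (Fin.last (n + 1)) (1 : R) : Fin (n + 2) → R) with hkos
    set u : Fin (n + 2) → R := w + ∑ i, a i • kos i with hu
    have hulast : u (Fin.last (n + 1)) = 0 := by
      have : (∑ i, a i • kos i) (Fin.last (n + 1)) = -(f * c) := by
        rw [Finset.sum_apply]
        rw [show -(f * c) = ∑ i, -(f * (a i * gv i)) by
          rw [← ha, Finset.mul_sum]; exact (Finset.sum_neg_distrib ..).symm]
        refine Finset.sum_congr rfl fun i _ => ?_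
        simp [hkos, Pi.single_apply, (Fin.castSucc_lt_last i).ne]
        ring
      rw [hu]
      simp only [Pi.add_apply, this]
      linear_combination -hcf
    have husyz : ∑ j, u j.castSucc * gv j = 0 := by
      have hcoord : ∀ j : Fin (n + 1), u j.castSucc = w j.castSucc + a j * g := by
        intro j
        rw [hu]
        simp only [Pi.add_apply, Finset.sum_apply]
        congr 1
        rw [show a j * g = ∑ i, if i = j then a i * g else 0 by
          rw [Finset.sum_ite_eq' Finset.univ j (fun i => a i * g)]; simp]
        refine Finset.sum_congr rfl fun i _ => ?_
        simp [hkos, Pi.single_apply, (Fin.castSucc_lt_last j).ne', Fin.castSucc_inj]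
        split
        · next h => subst h; simp
        · next h => rw [if_neg (fun hh => h hh.symm)]
      have hkey : (∑ j, w j.castSucc * gv j + c * g) * f = 0 := by
        have : c * g * f = w (Fin.last (n + 1)) * g := by
          rw [← hcf]; ring
        rw [add_mul]
        linear_combination hw + this
      have hzero : ∑ j, w j.castSucc * gv j + c * g = 0 := hf.2 _ hkey
      calc ∑ j, u j.castSucc * gv j
          = ∑ j, (w j.castSucc * gv j + a j * g * gv j) := by
            refine Finset.sum_congr rfl fun j _ => ?_
            rw [hcoord j]; ring
        _ = ∑ j, w j.castSucc * gv j + (∑ j, a j * gv j) * g := by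
            rw [Finset.sum_add_distrib, Finset.sum_mul]
            congr 1
            exact Finset.sum_congr rfl fun j _ => by ring
        _ = 0 := by rw [ha]; exact hzero
    have hwu : w = u - ∑ i, a i • kos i := by rw [hu]; abel
    rw [hwu]
    refine sub_mem (Submodule.subset_span (Or.inl ⟨hulast, husyz⟩)) ?_
    exact Submodule.sum_mem _ fun i _ =>
      Submodule.smul_mem _ _ (Submodule.subset_span (Or.inr ⟨i, rfl⟩))
  · intro hw
    induction hw using Submodule.span_induction with
    | mem x hx =>
      rcases hx with ⟨hlast, hsyz⟩ | ⟨i, rfl⟩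
      · rw [hsum, hsyz, hlast]; ring
      · rw [hsum]
        have h1 : ∀ j : Fin (n + 1),
            (g • (Pi.single (Fin.castSucc i) (1 : R) : Fin (n + 2) → R)
              - (f * gv i) • (Pi.single (Fin.last (n + 1)) (1 : R) : Fin (n + 2) → R))
              j.castSucc * gv j = (if j = i then g * gv i else 0) := by
          intro j
          rcases eq_or_ne j i with h | h
          · subst h
            simp [Pi.single_apply, (Fin.castSucc_lt_last j).ne']
          · simp [Pi.single_apply, (Fin.castSucc_lt_last j).ne', Fin.castSucc_inj, h]
        rw [Finset.sum_congr rfl fun j _ => h1 j, Finset.sum_ite_eq' Finset.univ i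
          (fun _ => g * gv i)]
        simp [Pi.single_apply, (Fin.castSucc_lt_last i).ne]
        ring
    | zero => simp
    | add x y _ _ hx hy =>
      rw [hsum] at hx hy ⊢
      simp only [Pi.add_apply]
      rw [show ∑ j, (x j.castSucc + y j.castSucc) * gv j
        = ∑ j, x j.castSucc * gv j + ∑ j, y j.castSucc * gv j by
          rw [← Finset.sum_add_distrib]
          exact Finset.sum_congr rfl fun j _ => by ring]
      linear_combination hx + hy
    | smul r x _ hx =>
      rw [hsum] at hx ⊢
      simp only [Pi.smul_apply, smul_eq_mul]
      rw [show ∑ j, r * x j.castSucc * gv j = r * ∑ j, x j.castSucc * gv j by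
          rw [Finset.mul_sum]; exact Finset.sum_congr rfl fun j _ => by ring]
      linear_combination r * hx
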